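/- The approximate Hessian operator H̃ defined by H̃_{abcd} = δ_{ac}δ_{bd}Γ_{ab} + δ_{ad}δ_{bc} - 2δ_{abcd}, where Γ_{ab} = (1/n)Σᵢ Dⁱ_{bb}/Dⁱ_{aa} with Dⁱ positive definite, is a positive semidefinite quadratic form on p×p matrices: ⟨M, H̃ M⟩ = Σ_{a,b,c,d} H̃_{abcd} M_{ab} M_{cd} ≥ 0 for all M. -/

import Mathlib

open Matrix

theorem stmt7 {p n : ℕ} (hn : 0 < n) (D : Fin n → Matrix (Fin p) (Fin p) ℝ)
    (hD : ∀ i, (D i).PosDef)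
    (Γ : Fin p → Fin p → ℝ)
    (hΓ : ∀ a b, Γ a b = (1 / n : ℝ) * ∑ i, D i b b / D i a a)
    (Ht : Fin p → Fin p → Fin p → Fin p → ℝ)
    (hHt : ∀ a b c d, Ht a b c d =
      (if a = c ∧ b = d then Γ a b else 0) + (if a = d ∧ b = c then 1 else 0)
        - (if a = b ∧ b = c ∧ c = d then 2 else 0))
    (M : Matrix (Fin p) (Fin p) ℝ) :
    0 ≤ ∑ a, ∑ b, ∑ c, ∑ d, Ht a b c d * M a b * M c d := by
  have hdiag : ∀ i a, 0 < D i a a := by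
    intro i a
    have h := (hD i).diag_pos (i := a)
    simpa using h
  have hnR : (0 : ℝ) < n := by exact_mod_cast hn
  have hΓpos : ∀ a b, 0 < Γ a b := by
    intro a b
    rw [hΓ]
    apply mul_pos (by positivity)
    apply Finset.sum_pos (fun i _ => div_pos (hdiag i b) (hdiag i a))
    exact ⟨⟨0, hn⟩, Finset.mem_univ _⟩
  have hΓdiag : ∀ a, Γ a a = 1 := by
    intro a
    rw [hΓ]
    have : ∀ i : Fin n, D i a a / D i a a = 1 := fun i => div_self (hdiag i a).ne'
    simp [this]
    field_simp
  have hΓmul : ∀ a b, 1 ≤ Γ a b * Γ b a := by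
    intro a b
    have key : ((n : ℝ)) ^ 2 ≤ (∑ i, D i b b / D i a a) * (∑ i, D i a a / D i b b) := by
      have cs := Finset.sum_mul_sq_le_sq_mul_sq Finset.univ
        (fun i : Fin n => Real.sqrt (D i b b / D i a a))
        (fun i : Fin n => Real.sqrt (D i a a / D i b b))
      have h1 : ∀ i : Fin n, Real.sqrt (D i b b / D i a a) * Real.sqrt (D i a a / D i b b) = 1 := by
        intro i
        rw [← Real.sqrt_mul (div_pos (hdiag i b) (hdiag i a)).le,
          show D i b b / D i a a * (D i a a / D i b b) = 1 by
            rw [div_mul_div_comm, mul_comm]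
            exact div_self (mul_pos (hdiag i a) (hdiag i b)).ne', Real.sqrt_one]
      have h2 : ∀ i : Fin n, Real.sqrt (D i b b / D i a a) ^ 2 = D i b b / D i a a :=
        fun i => Real.sq_sqrt (div_pos (hdiag i b) (hdiag i a)).le
      have h3 : ∀ i : Fin n, Real.sqrt (D i a a / D i b b) ^ 2 = D i a a / D i b b :=
        fun i => Real.sq_sqrt (div_pos (hdiag i a) (hdiag i b)).le
      simp only [h1, h2, h3, Finset.sum_const, Finset.card_univ, Fintype.card_fin,
        nsmul_eq_mul, mul_one] at cs
      calc ((n : ℝ)) ^ 2 ≤ _ := cs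
        _ = _ := by rfl
    rw [hΓ a b, hΓ b a]
    have e : (1 / (n:ℝ) * ∑ i, D i b b / D i a a) * (1 / (n:ℝ) * ∑ i, D i a a / D i b b)
        = ((∑ i, D i b b / D i a a) * (∑ i, D i a a / D i b b)) / ((n:ℝ) * n) := by ring
    rw [e, le_div_iff₀ (by positivity)]
    nlinarith [key]
  -- collapse inner double sum
  have hcollapse : ∀ a b, (∑ c, ∑ d, Ht a b c d * M a b * M c d)
      = Γ a b * M a b ^ 2 + M a b * M b a - (if a = b then 2 * M a b ^ 2 else 0) := by
    intro a b
    simp only [hHt]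
    simp only [sub_mul, add_mul, ite_mul, zero_mul, Finset.sum_sub_distrib,
      Finset.sum_add_distrib]
    simp [Finset.sum_ite_eq, Finset.sum_ite_eq', ite_and]
    split <;> rename_i h <;> [subst h; skip] <;> ring
  simp only [hcollapse]
  set f : Fin p → Fin p → ℝ := fun a b =>
    Γ a b * M a b ^ 2 + M a b * M b a - (if a = b then 2 * M a b ^ 2 else 0) with hf
  have hsym : ∑ a, ∑ b, f a b = ∑ a, ∑ b, f b a := Finset.sum_comm
  have htwo : 2 * (∑ a, ∑ b, f a b) = ∑ a, ∑ b, (f a b + f b a) := by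
    rw [two_mul]
    nth_rewrite 2 [hsym]
    rw [← Finset.sum_add_distrib]
    congr 1; ext a; rw [← Finset.sum_add_distrib]
  have hpt : ∀ a b, 0 ≤ f a b + f b a := by
    intro a b
    simp only [hf]
    by_cases hab : a = b
    · subst hab
      simp [hΓdiag a]
      ring_nf
      nlinarith [sq_nonneg (M a a)]
    · rw [if_neg hab, if_neg (Ne.symm hab)]
      have h1 := hΓpos a b
      have h2 := hΓpos b a
      have h3 := hΓmul a b
      nlinarith [sq_nonneg (Γ a b * M a b + M b a), mul_pos h1 h2,
        sq_nonneg (M b a), mul_nonneg (sq_nonneg (M b a)) (sub_nonneg.2 h3)]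
  have : 0 ≤ 2 * (∑ a, ∑ b, f a b) := by
    rw [htwo]
    exact Finset.sum_nonneg fun a _ => Finset.sum_nonneg fun b _ => hpt a b
  linarith
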